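/- Let (y, z, θ) solve the translator system with μ = 0, λ ≠ 0 and f(θ₀) ≠ 0, where f(θ) = −(θ − θ₀ + λ)·sin θ. Then at least one of the two limits lim_{s→+∞} z(s), lim_{s→−∞} z(s) exists and is finite. -/

import Mathlib

open Real Filter Topology Set

open Real Filter Topology Set

lemma coreTop (g : ℝ → ℝ) (z : ℝ → ℝ) (b K : ℝ) (hb : b < 0) (hz0 : z 0 = 0)
    (hzd : ∀ s, HasDerivAt z (g (z s)) s)
    (hgneg : ∀ x ∈ Set.Ioc b 0, g x < 0)
    (habs : ∀ x ∈ Set.Icc b 0, |g x| ≤ K * (x - b)) :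
    ∃ L, Tendsto z atTop (𝓝 L) := by
  have hzc : Continuous z := by
    rw [continuous_iff_continuousAt]; exact fun s => (hzd s).continuousAt
  -- upper invariance
  have hupper : ∀ t, 0 ≤ t → z t ≤ 0 := by
    intro t ht
    by_contra hzt
    push_neg at hzt
    set A : Set ℝ := Set.Icc 0 t ∩ z ⁻¹' Set.Iic 0 with hA
    have hAcomp : IsCompact A := isCompact_Icc.inter_right (isClosed_Iic.preimage hzc)
    have hAne : A.Nonempty := ⟨0, ⟨le_refl 0, ht⟩, by simp [hz0]⟩
    set t₀ := sSup A with ht₀def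
    have ht₀A : t₀ ∈ A := hAcomp.sSup_mem hAne
    have hbdd : BddAbove A := hAcomp.bddAbove
    have ht₀t : t₀ < t := by
      rcases lt_or_eq_of_le ht₀A.1.2 with h | h
      · exact h
      · exact absurd (h ▸ ht₀A.2 : z t ≤ 0) (not_le.2 hzt)
    have hgt : ∀ s, t₀ < s → s ≤ t → 0 < z s := by
      intro s hs hst
      by_contra hzs
      push_neg at hzs
      have : s ∈ A := ⟨⟨le_trans ht₀A.1.1 hs.le, hst⟩, hzs⟩
      exact absurd (le_csSup hbdd this) (not_le.2 hs)
    have hzt₀ : z t₀ = 0 := by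
      refine le_antisymm ht₀A.2 ?_
      have htend : Tendsto z (𝓝[>] t₀) (𝓝 (z t₀)) :=
        (hzc.continuousAt.tendsto).mono_left nhdsWithin_le_nhds
      have hev : ∀ᶠ s in 𝓝[>] t₀, 0 < z s := by
        filter_upwards [Ioo_mem_nhdsGT ht₀t] with s hs
        exact hgt s hs.1 hs.2.le
      exact ge_of_tendsto htend (hev.mono fun s hs => hs.le)
    have hg0 : g (z t₀) < 0 := by rw [hzt₀]; exact hgneg 0 ⟨hb, le_refl 0⟩
    have hslope := hasDerivAt_iff_tendsto_slope.1 (hzd t₀)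
    have hslope' : Tendsto (slope z t₀) (𝓝[>] t₀) (𝓝 (g (z t₀))) :=
      hslope.mono_left (nhdsWithin_mono _ fun x hx => ne_of_gt hx)
    have hev2 : ∀ᶠ s in 𝓝[>] t₀, slope z t₀ s < 0 :=
      hslope'.eventually_lt_const hg0
    have hev3 : ∀ᶠ s in 𝓝[>] t₀, s ∈ Set.Ioo t₀ t :=
      Ioo_mem_nhdsGT ht₀t
    obtain ⟨s, hs1, hs2⟩ := (hev2.and hev3).exists
    have hpos := hgt s hs2.1 hs2.2.le
    rw [slope_def_field, hzt₀, sub_zero] at hs1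
    have : z s < 0 := by
      have hd : 0 < s - t₀ := sub_pos.2 hs2.1
      have := mul_neg_of_neg_of_pos hs1 hd
      rwa [div_mul_cancel₀] at this
      exact ne_of_gt hd
    linarith
  -- K positive
  have hK : 0 < K := by
    have h0 := habs 0 ⟨hb.le, le_refl 0⟩
    have hg0 := hgneg 0 ⟨hb, le_refl 0⟩
    have : 0 < |g 0| := abs_pos.2 (ne_of_lt hg0)
    nlinarith
  -- lower invariance
  have hlower : ∀ t, 0 ≤ t → b < z t := by
    intro t ht
    by_contra hzt
    push_neg at hzt
    set B : Set ℝ := Set.Icc 0 t ∩ z ⁻¹' Set.Iic b with hB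
    have hBcomp : IsCompact B := isCompact_Icc.inter_right (isClosed_Iic.preimage hzc)
    have hBne : B.Nonempty := ⟨t, ⟨ht, le_refl t⟩, hzt⟩
    set t₁ := sInf B with ht₁def
    have ht₁B : t₁ ∈ B := hBcomp.sInf_mem hBne
    have hbddB : BddBelow B := hBcomp.bddBelow
    have ht₁pos : 0 < t₁ := by
      rcases lt_or_eq_of_le ht₁B.1.1 with h | h
      · exact h
      · exfalso; have h2 : z t₁ ≤ b := ht₁B.2; rw [← h, hz0] at h2; linarith
    have hgtb : ∀ s, 0 ≤ s → s < t₁ → b < z s := by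
      intro s hs hst
      by_contra hzs
      push_neg at hzs
      have : s ∈ B := ⟨⟨hs, le_trans hst.le ht₁B.1.2⟩, hzs⟩
      exact absurd (csInf_le hbddB this) (not_le.2 hst)
    have hzt₁ : z t₁ = b := by
      refine le_antisymm ht₁B.2 ?_
      have htend : Tendsto z (𝓝[<] t₁) (𝓝 (z t₁)) :=
        (hzc.continuousAt.tendsto).mono_left nhdsWithin_le_nhds
      have hev : ∀ᶠ s in 𝓝[<] t₁, b < z s := by
        filter_upwards [Ioo_mem_nhdsLT ht₁pos] with s hs
        exact hgtb s hs.1.le hs.2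
      exact ge_of_tendsto htend (hev.mono fun s hs => hs.le)
    -- on [0, t₁], b ≤ z s ≤ 0
    have hrange : ∀ s ∈ Set.Icc 0 t₁, z s ∈ Set.Icc b 0 := by
      intro s hs
      constructor
      · rcases lt_or_eq_of_le hs.2 with h | h
        · exact (hgtb s hs.1 h).le
        · rw [h, hzt₁]
      · exact hupper s (le_trans hs.1 (le_refl s) : 0 ≤ s) |>.trans_eq rfl
    set φ : ℝ → ℝ := fun s => Real.exp (K * s) * (z s - b) with hφ
    have hφd : ∀ s, HasDerivAt φ (Real.exp (K * s) * (K * (z s - b) + g (z s))) s := by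
      intro s
      have h1 : HasDerivAt (fun u => Real.exp (K * u)) (Real.exp (K * s) * K) s := by
        simpa [Function.comp_def] using (Real.hasDerivAt_exp (K * s)).comp s ((hasDerivAt_id s).const_mul K)
      have h2 : HasDerivAt (fun u => z u - b) (g (z s)) s := (hzd s).sub_const b
      have := h1.mul h2
      exact this.congr_deriv (by ring)
    have hmono : MonotoneOn φ (Set.Icc 0 t₁) := by
      apply monotoneOn_of_deriv_nonneg (convex_Icc 0 t₁)
      · exact Continuous.continuousOn (by continuity : Continuous φ)
      · intro x hx
        exact (hφd x).differentiableAt.differentiableWithinAt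
      · intro x hx
        rw [interior_Icc] at hx
        rw [(hφd x).deriv]
        have hzx := hrange x ⟨hx.1.le, hx.2.le⟩
        have h1 := habs (z x) hzx
        have h2 : -(K * (z x - b)) ≤ g (z x) := by
          have := neg_abs_le (g (z x))
          linarith
        have : 0 ≤ K * (z x - b) + g (z x) := by linarith
        positivity
    have h01 : φ 0 ≤ φ t₁ := hmono ⟨le_refl 0, ht₁pos.le⟩ ⟨ht₁pos.le, le_refl t₁⟩ ht₁pos.le
    have hφ0 : φ 0 = -b := by simp [hφ, hz0]
    have hφt₁ : φ t₁ = 0 := by simp [hφ, hzt₁]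
    rw [hφ0, hφt₁] at h01
    linarith
  -- antitone on [0,∞)
  have hanti : AntitoneOn z (Set.Ici 0) := by
    apply antitoneOn_of_deriv_nonpos (convex_Ici 0) hzc.continuousOn
    · intro x hx; exact (hzd x).differentiableAt.differentiableWithinAt
    · intro x hx
      rw [interior_Ici] at hx
      rw [(hzd x).deriv]
      exact (hgneg (z x) ⟨hlower x hx.le, hupper x hx.le⟩).le
  set w : ℝ → ℝ := fun s => z (max s 0) with hw
  have hwanti : Antitone w := by
    intro s t hst
    exact hanti (le_max_right s 0) (le_max_right t 0) (max_le_max hst (le_refl 0))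
  have hwbdd : BddBelow (Set.range w) := by
    refine ⟨b, ?_⟩
    rintro x ⟨s, rfl⟩
    exact (hlower (max s 0) (le_max_right s 0)).le
  refine ⟨⨅ s, w s, ?_⟩
  have := tendsto_atTop_ciInf hwanti hwbdd
  refine this.congr' ?_
  filter_upwards [eventually_ge_atTop (0:ℝ)] with s hs
  simp [hw, max_eq_left hs]

lemma coreBot (g : ℝ → ℝ) (z : ℝ → ℝ) (b K : ℝ) (hb : b < 0) (hz0 : z 0 = 0)
    (hzd : ∀ s, HasDerivAt z (g (z s)) s)
    (hgpos : ∀ x ∈ Set.Ioc b 0, 0 < g x)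
    (habs : ∀ x ∈ Set.Icc b 0, |g x| ≤ K * (x - b)) :
    ∃ L, Tendsto z atBot (𝓝 L) := by
  obtain ⟨L, hL⟩ := coreTop (fun x => -g x) (fun s => z (-s)) b K hb (by simp [hz0])
    (fun s => by
      have := (hzd (-s)).comp s ((hasDerivAt_id s).neg)
      simpa [mul_comm, Function.comp_def] using this)
    (fun x hx => neg_lt_zero.2 (hgpos x hx))
    (fun x hx => by simpa using habs x hx)
  refine ⟨L, ?_⟩
  have h1 : Tendsto (fun s : ℝ => -s) atBot atTop := tendsto_neg_atBot_atTop
  have h2 := hL.comp h1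
  simpa [Function.comp_def] using h2

-- pick for lam > 0
lemma pickPos (lam θ₀ : ℝ) (hlam : 0 < lam) (hsin : Real.sin θ₀ ≠ 0) :
    ∃ b K : ℝ, b < 0 ∧
      (∀ x ∈ Set.Ioc b 0,
        0 < Real.sin θ₀ * Real.sin (θ₀ - lam + lam * Real.exp (-x))) ∧
      (∀ x ∈ Set.Icc b 0,
        |Real.sin (θ₀ - lam + lam * Real.exp (-x))| ≤ K * (x - b)) := by
  set c := θ₀ - lam with hc
  set n : ℤ := ⌈θ₀ / π⌉ with hn
  set m : ℝ := n * π with hm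
  have hπ : 0 < π := Real.pi_pos
  have hθm : θ₀ < m := by
    have h1 : θ₀ / π ≤ n := Int.le_ceil _
    have h2 : θ₀ ≤ m := by
      rw [hm]; calc θ₀ = (θ₀ / π) * π := by field_simp
        _ ≤ n * π := by apply mul_le_mul_of_nonneg_right h1 hπ.le
    rcases lt_or_eq_of_le h2 with h | h
    · exact h
    · exfalso; apply hsin; rw [h, hm]; exact Real.sin_int_mul_pi n
  have hmθ : m - π < θ₀ := by
    have h1 : (n : ℝ) < θ₀ / π + 1 := by
      have := Int.ceil_lt_add_one (θ₀ / π)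
      exact_mod_cast this
    have h2 : (n:ℝ) * π < (θ₀ / π + 1) * π := mul_lt_mul_of_pos_right h1 hπ
    have h3 : (θ₀ / π + 1) * π = θ₀ + π := by field_simp
    rw [hm]; linarith
  have hmc : lam < m - c := by rw [hc]; linarith
  have hratio : 1 < (m - c) / lam := (one_lt_div hlam).2 hmc
  set b : ℝ := -Real.log ((m - c) / lam) with hb
  have hbneg : b < 0 := by
    rw [hb, neg_lt, neg_zero]
    exact Real.log_pos hratio
  have hexpb : Real.exp (-b) = (m - c) / lam := by
    rw [hb, neg_neg, Real.exp_log (by linarith : (0:ℝ) < (m - c) / lam)]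
  set K : ℝ := m - c with hK
  refine ⟨b, K, hbneg, ?_, ?_⟩
  · intro x hx
    set u := c + lam * Real.exp (-x) with hu
    have h1 : 1 ≤ Real.exp (-x) := by
      rw [← Real.exp_zero]; exact Real.exp_le_exp.2 (by linarith [hx.2])
    have h2 : Real.exp (-x) < Real.exp (-b) := Real.exp_lt_exp.2 (by linarith [hx.1])
    have hu1 : θ₀ ≤ u := by rw [hu, hc]; nlinarith
    have hu2 : u < m := by
      rw [hu]
      have : lam * Real.exp (-x) < lam * Real.exp (-b) := by nlinarith
      rw [hexpb] at this
      have : lam * Real.exp (-x) < m - c := by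
        calc lam * Real.exp (-x) < lam * ((m - c)/lam) := by nlinarith [Real.exp_lt_exp.2 (show -x < -b by linarith [hx.1])]
          _ = m - c := by field_simp
      linarith
    -- sin u = cos m * sin (u - m), sin θ₀ = cos m * sin (θ₀ - m)
    have hsinm : Real.sin m = 0 := Real.sin_int_mul_pi n
    have key : ∀ v : ℝ, Real.sin v = Real.cos m * Real.sin (v - m) := by
      intro v
      have h := Real.sin_add (v - m) m
      rw [hsinm, mul_zero, add_zero, sub_add_cancel] at h
      rw [h, mul_comm]
    have hcos2 : Real.cos m ^ 2 = 1 := by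
      have := Real.sin_sq_add_cos_sq m
      rw [hsinm] at this; nlinarith
    have hsθ : 0 < Real.sin (m - θ₀) := Real.sin_pos_of_pos_of_lt_pi (by linarith) (by linarith)
    have hsu : 0 < Real.sin (m - u) := Real.sin_pos_of_pos_of_lt_pi (by linarith) (by linarith)
    have e1 : Real.sin θ₀ = Real.cos m * -Real.sin (m - θ₀) := by
      rw [key θ₀]; congr 1; rw [← Real.sin_neg]; ring_nf
    have e2 : Real.sin u = Real.cos m * -Real.sin (m - u) := by
      rw [key u]; congr 1; rw [← Real.sin_neg]; ring_nf
    have : Real.sin θ₀ * Real.sin u = Real.cos m ^ 2 * (Real.sin (m - θ₀) * Real.sin (m - u)) := by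
      rw [e1, e2]; ring
    rw [this, hcos2]
    nlinarith
  · intro x hx
    set u := c + lam * Real.exp (-x) with hu
    have hsinm : Real.sin m = 0 := Real.sin_int_mul_pi n
    have key : Real.sin u = Real.cos m * Real.sin (u - m) := by
      have h := Real.sin_add (u - m) m
      rw [hsinm, mul_zero, add_zero, sub_add_cancel] at h
      rw [h, mul_comm]
    have h1 : 1 ≤ Real.exp (-x) := by
      rw [← Real.exp_zero]; exact Real.exp_le_exp.2 (by linarith [hx.2])
    have h2 : Real.exp (-x) ≤ Real.exp (-b) := Real.exp_le_exp.2 (by linarith [hx.1])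
    have habs1 : |Real.sin u| ≤ |u - m| := by
      rw [key, abs_mul]
      calc |Real.cos m| * |Real.sin (u - m)| ≤ 1 * |u - m| := by
            apply mul_le_mul (Real.abs_cos_le_one m) (Real.abs_sin_le_abs) (abs_nonneg _) zero_le_one
        _ = |u - m| := one_mul _
    have hum : u ≤ m := by
      rw [hu]
      have : lam * Real.exp (-x) ≤ lam * ((m-c)/lam) := by
        rw [← hexpb]; nlinarith
      have : lam * Real.exp (-x) ≤ m - c := by
        calc lam * Real.exp (-x) ≤ lam * ((m-c)/lam) := this
          _ = m - c := by field_simp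
      linarith
    have habs2 : |u - m| = m - u := by rw [abs_sub_comm, abs_of_nonneg (by linarith)]
    -- m - u = lam * (exp(-b) - exp(-x)) ≤ lam * exp(-b) * (x - b) = K (x-b)
    have hmu : m - u = lam * (Real.exp (-b) - Real.exp (-x)) := by
      rw [hu, hexpb]; field_simp; ring
    have hexpineq : Real.exp (-b) - Real.exp (-x) ≤ Real.exp (-b) * (x - b) := by
      have h3 : Real.exp (-x) = Real.exp (-b) * Real.exp (b - x) := by
        rw [← Real.exp_add]; congr 1; ring
      have h4 : 1 - (x - b) ≤ Real.exp (b - x) := by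
        have := Real.add_one_le_exp (b - x)
        linarith
      have h5 : Real.exp (-b) * (1 - (x - b)) ≤ Real.exp (-x) := by
        rw [h3]
        exact mul_le_mul_of_nonneg_left h4 (Real.exp_pos _).le
      have h6 : Real.exp (-b) * (1 - (x - b)) = Real.exp (-b) - Real.exp (-b) * (x - b) := by
        ring
      rw [h6] at h5
      linarith
    have hfin : m - u ≤ K * (x - b) := by
      rw [hmu]
      have hKe : K = lam * Real.exp (-b) := by rw [hK, hexpb]; field_simp; exact hK.symm
      rw [hKe]
      calc lam * (Real.exp (-b) - Real.exp (-x)) ≤ lam * (Real.exp (-b) * (x - b)) := by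
            apply mul_le_mul_of_nonneg_left hexpineq hlam.le
        _ = lam * Real.exp (-b) * (x - b) := by ring
    calc |Real.sin u| ≤ |u - m| := habs1
      _ = m - u := habs2
      _ ≤ K * (x - b) := hfin

lemma pick (lam θ₀ : ℝ) (hlam : lam ≠ 0) (hsin : Real.sin θ₀ ≠ 0) :
    ∃ b K : ℝ, b < 0 ∧
      (∀ x ∈ Set.Ioc b 0,
        0 < Real.sin θ₀ * Real.sin (θ₀ - lam + lam * Real.exp (-x))) ∧
      (∀ x ∈ Set.Icc b 0,
        |Real.sin (θ₀ - lam + lam * Real.exp (-x))| ≤ K * (x - b)) := by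
  rcases hlam.lt_or_gt with h | h
  · obtain ⟨b, K, hb, hprod, habs⟩ := pickPos (-lam) (-θ₀) (by linarith) (by simp [hsin])
    have harg : ∀ x : ℝ, -θ₀ - -lam + -lam * Real.exp (-x)
        = -(θ₀ - lam + lam * Real.exp (-x)) := fun x => by ring
    refine ⟨b, K, hb, fun x hx => ?_, fun x hx => ?_⟩
    · have := hprod x hx
      rw [harg x, Real.sin_neg, Real.sin_neg] at this
      simpa [neg_mul_neg] using this
    · have := habs x hx
      rwa [harg x, Real.sin_neg, abs_neg] at this
  · exact pickPos lam θ₀ h hsin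

theorem stmt12
    (lam μ θ₀ : ℝ) (y z θ : ℝ → ℝ)
    (hy0 : y 0 = 0) (hz0 : z 0 = 0) (hθ0 : θ 0 = θ₀)
    (hy : ∀ s : ℝ, HasDerivAt y (Real.exp (z s) * Real.cos (θ s)) s)
    (hz : ∀ s : ℝ, HasDerivAt z (Real.sin (θ s)) s)
    (hθ : ∀ s : ℝ, HasDerivAt θ
      (-lam * Real.exp (-z s) * Real.sin (θ s) +
        μ * (Real.cos (θ s) - y s * Real.exp (-z s) * Real.sin (θ s))) s)
    (hμ : μ = 0) (hlam : lam ≠ 0)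
    (hne : μ * Real.cos θ₀ - (θ₀ - θ₀ + lam) * Real.sin θ₀ ≠ 0) :
    (∃ L : ℝ, Tendsto z atTop (𝓝 L)) ∨ (∃ L : ℝ, Tendsto z atBot (𝓝 L)) := by
  have hsin : Real.sin θ₀ ≠ 0 := by
    intro h
    apply hne
    rw [hμ, h]
    ring
  have hθ' : ∀ s, HasDerivAt θ (-lam * Real.exp (-z s) * Real.sin (θ s)) s := by
    intro s
    have := hθ s
    rw [hμ] at this
    simpa using this
  set F : ℝ → ℝ := fun s => θ s - lam * Real.exp (-z s) with hF
  have hFd : ∀ s, HasDerivAt F 0 s := by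
    intro s
    have hE : HasDerivAt (fun u => Real.exp (-z u)) (Real.exp (-z s) * -Real.sin (θ s)) s :=
      ((hz s).neg).exp
    have := (hθ' s).sub (hE.const_mul lam)
    exact this.congr_deriv (by ring)
  have hFc : ∀ s, F s = F 0 :=
    fun s => is_const_of_deriv_eq_zero (fun u => (hFd u).differentiableAt)
      (fun u => (hFd u).deriv) s 0
  have θeq : ∀ s, θ s = θ₀ - lam + lam * Real.exp (-z s) := by
    intro s
    have h1 := hFc s
    rw [hF] at h1
    simp only [hz0, hθ0, neg_zero, Real.exp_zero, mul_one] at h1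
    linarith
  set g : ℝ → ℝ := fun x => Real.sin (θ₀ - lam + lam * Real.exp (-x)) with hg
  have hzd : ∀ s, HasDerivAt z (g (z s)) s := by
    intro s
    have : g (z s) = Real.sin (θ s) := by
      show Real.sin (θ₀ - lam + lam * Real.exp (-z s)) = Real.sin (θ s)
      rw [← θeq s]
    rw [this]
    exact hz s
  obtain ⟨b, K, hb, hprod, habs⟩ := pick lam θ₀ hlam hsin
  rcases lt_or_gt_of_ne hsin with hneg | hpos
  · -- sin θ₀ < 0 : z decreasing forward, limit at +∞
    left
    apply coreTop g z b K hb hz0 hzd ?_ habs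
    intro x hx
    rcases mul_pos_iff.1 (hprod x hx) with ⟨h1, h2⟩ | ⟨h1, h2⟩
    · linarith
    · exact h2
  · -- sin θ₀ > 0 : limit at -∞
    right
    apply coreBot g z b K hb hz0 hzd ?_ habs
    intro x hx
    rcases mul_pos_iff.1 (hprod x hx) with ⟨h1, h2⟩ | ⟨h1, h2⟩
    · exact h2
    · linarith
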